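/- The group P_k = ⟨a, b ∣ a b^{2^k} a⁻¹ b^{2^k}, b a² b⁻¹ a²⟩ is isomorphic to an amalgamated free product K₁ *_{ℤ²} K₂ of two Klein bottle groups K₁ = ⟨a, x ∣ a x a⁻¹ x⟩ and K₂ = ⟨y, b ∣ b y b⁻¹ y⟩, amalgamated along the subgroups ⟨a², x⟩ ≅ ℤ² and ⟨b^{2^k}, y⟩ ≅ ℤ² via the isomorphism sending x ↦ b^{2^k} and a² ↦ y. -/

import Mathlib

/-- The relations of `P_k = ⟨a, b ∣ a b^(2^k) a⁻¹ b^(2^k), b a² b⁻¹ a²⟩`. -/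
def PkRels (k : ℕ) : Set (FreeGroup (Fin 2)) :=
  { FreeGroup.of 0 * (FreeGroup.of 1) ^ (2 ^ k) * (FreeGroup.of 0)⁻¹ * (FreeGroup.of 1) ^ (2 ^ k),
    FreeGroup.of 1 * (FreeGroup.of 0) ^ 2 * (FreeGroup.of 1)⁻¹ * (FreeGroup.of 0) ^ 2 }

abbrev Pk (k : ℕ) : Type := PresentedGroup (PkRels k)

/-- The Klein bottle group `K₁ = ⟨a, x ∣ a x a⁻¹ x⟩`, with `a = of 0`, `x = of 1`. -/
abbrev K₁ : Type :=
  PresentedGroup ({FreeGroup.of 0 * FreeGroup.of 1 * (FreeGroup.of 0)⁻¹ * FreeGroup.of 1} :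
    Set (FreeGroup (Fin 2)))

/-- The Klein bottle group `K₂ = ⟨y, b ∣ b y b⁻¹ y⟩`, with `y = of 0`, `b = of 1`. -/
abbrev K₂ : Type :=
  PresentedGroup ({FreeGroup.of 1 * FreeGroup.of 0 * (FreeGroup.of 1)⁻¹ * FreeGroup.of 0} :
    Set (FreeGroup (Fin 2)))

def ka : K₁ := PresentedGroup.of 0
def kx : K₁ := PresentedGroup.of 1
def ky : K₂ := PresentedGroup.of 0
def kb : K₂ := PresentedGroup.of 1

/-- The two Klein bottle groups, as a `Bool`-indexed family. -/
def kleinFam : Bool → Type := fun i => match i with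
  | true => K₁
  | false => K₂

instance kleinFamGroup : ∀ i, Group (kleinFam i) := fun i => match i with
  | true => inferInstanceAs (Group K₁)
  | false => inferInstanceAs (Group K₂)

/-- First generator of `ℤ²` (written multiplicatively). -/
def e₁ : Multiplicative (ℤ × ℤ) := Multiplicative.ofAdd (1, 0)

/-- Second generator of `ℤ²` (written multiplicatively). -/
def e₂ : Multiplicative (ℤ × ℤ) := Multiplicative.ofAdd (0, 1)

/-! ### Auxiliary material -/

open Multiplicative SemidirectProduct

lemma PresentedGroup.rel_one {α : Type*} {rels : Set (FreeGroup α)} {r : FreeGroup α}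
    (h : r ∈ rels) : PresentedGroup.mk rels r = 1 :=
  (QuotientGroup.eq_one_iff r).2 (Subgroup.subset_normalClosure h)

private lemma swap_mid {G : Type*} [Group G] (a b c d : G) (hb : b * c = c * b) :
    a * b * (c * d) = a * c * (b * d) := by
  rw [mul_assoc, ← mul_assoc b, hb, mul_assoc, ← mul_assoc]

/-- The homomorphism `ℤ² → G` determined by a commuting pair. -/
def pairHom {G : Type*} [Group G] (s t : G) (h : Commute s t) :
    Multiplicative (ℤ × ℤ) →* G :=
  MonoidHom.mk' (fun p => s ^ (Multiplicative.toAdd p).1 * t ^ (Multiplicative.toAdd p).2) (by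
    intro p q
    show s ^ ((Multiplicative.toAdd p).1 + (Multiplicative.toAdd q).1) *
        t ^ ((Multiplicative.toAdd p).2 + (Multiplicative.toAdd q).2) = _
    rw [zpow_add, zpow_add]
    exact swap_mid _ _ _ _ ((h.zpow_zpow _ _).eq))

@[simp] lemma pairHom_apply {G : Type*} [Group G] (s t : G) (h : Commute s t)
    (p : Multiplicative (ℤ × ℤ)) :
    pairHom s t h p = s ^ (Multiplicative.toAdd p).1 * t ^ (Multiplicative.toAdd p).2 := rfl

lemma pairHom_e₁ {G : Type*} [Group G] (s t : G) (h : Commute s t) :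
    pairHom s t h e₁ = s := by simp [e₁]

lemma pairHom_e₂ {G : Type*} [Group G] (s t : G) (h : Commute s t) :
    pairHom s t h e₂ = t := by simp [e₂]

/-- From the Klein bottle relation `u v u⁻¹ v = 1` deduce that `u²` commutes with `v`. -/
lemma comm_sq_of_rel {G : Type*} [Group G] {u v : G} (h : u * v * u⁻¹ * v = 1) :
    Commute (u ^ 2) v := by
  have hc : u * v * u⁻¹ = v⁻¹ := mul_eq_one_iff_eq_inv.1 h
  have hc' : u * v⁻¹ * u⁻¹ = v := by
    calc u * v⁻¹ * u⁻¹ = (u * v * u⁻¹)⁻¹ := by group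
    _ = v := by rw [hc, inv_inv]
  have h2 : u ^ 2 * v * (u ^ 2)⁻¹ = v := by
    calc u ^ 2 * v * (u ^ 2)⁻¹ = u * (u * v * u⁻¹) * u⁻¹ := by rw [pow_two]; group
      _ = u * v⁻¹ * u⁻¹ := by rw [hc]
      _ = v := hc'
  exact mul_inv_eq_iff_eq_mul.1 h2

/-- Generic check of the `K₁`-shaped relation for a lift. -/
lemma liftK₁_rels {G : Type*} [Group G] (u v : G) (h : u * v * u⁻¹ * v = 1) :
    ∀ r ∈ ({FreeGroup.of 0 * FreeGroup.of 1 * (FreeGroup.of 0)⁻¹ * FreeGroup.of 1} :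
      Set (FreeGroup (Fin 2))), FreeGroup.lift ![u, v] r = 1 := by
  intro r hr
  rw [Set.mem_singleton_iff] at hr
  subst hr
  simpa using h

/-- Generic check of the `K₂`-shaped relation for a lift. -/
lemma liftK₂_rels {G : Type*} [Group G] (u v : G) (h : v * u * v⁻¹ * u = 1) :
    ∀ r ∈ ({FreeGroup.of 1 * FreeGroup.of 0 * (FreeGroup.of 1)⁻¹ * FreeGroup.of 0} :
      Set (FreeGroup (Fin 2))), FreeGroup.lift ![u, v] r = 1 := by
  intro r hr
  rw [Set.mem_singleton_iff] at hr
  subst hr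
  simpa using h

/-- Generic check of the `Pk`-relations for a lift. -/
lemma liftPk_rels {G : Type*} [Group G] (k : ℕ) (A B : G)
    (h1 : A * B ^ (2 ^ k) * A⁻¹ * B ^ (2 ^ k) = 1)
    (h2 : B * A ^ 2 * B⁻¹ * A ^ 2 = 1) :
    ∀ r ∈ PkRels k, FreeGroup.lift ![A, B] r = 1 := by
  intro r hr
  rcases Set.mem_insert_iff.1 hr with hr | hr
  · subst hr; simpa using h1
  · rw [Set.mem_singleton_iff] at hr
    subst hr; simpa using h2

lemma relK₁ : ka * kx * ka⁻¹ * kx = 1 := by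
  have := PresentedGroup.rel_one (rels :=
    ({FreeGroup.of 0 * FreeGroup.of 1 * (FreeGroup.of 0)⁻¹ * FreeGroup.of 1} :
      Set (FreeGroup (Fin 2)))) rfl
  simpa [ka, kx, PresentedGroup.of, map_mul, map_inv] using this

lemma relK₂ : kb * ky * kb⁻¹ * ky = 1 := by
  have := PresentedGroup.rel_one (rels :=
    ({FreeGroup.of 1 * FreeGroup.of 0 * (FreeGroup.of 1)⁻¹ * FreeGroup.of 0} :
      Set (FreeGroup (Fin 2)))) rfl
  simpa [ky, kb, PresentedGroup.of, map_mul, map_inv] using this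

lemma commK₁ : Commute (ka ^ 2) kx := comm_sq_of_rel relK₁

lemma commK₂ (k : ℕ) (hk : 0 < k) : Commute ky (kb ^ (2 ^ k)) := by
  have h := comm_sq_of_rel relK₂
  have he : kb ^ (2 ^ k) = (kb ^ 2) ^ (2 ^ (k - 1)) := by
    rw [← pow_mul]
    congr 1
    conv_lhs => rw [show k = 1 + (k - 1) by omega]
    rw [pow_add, pow_one]
  rw [he]
  exact (h.pow_left _).symm

/-! ### The semidirect product `ℤ ⋊ ℤ` used for injectivity -/

def negAct : Multiplicative ℤ →* MulAut (Multiplicative ℤ) :=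
  zpowersHom _ (MulEquiv.inv (Multiplicative ℤ))

abbrev D : Type := (Multiplicative ℤ) ⋊[negAct] (Multiplicative ℤ)

lemma negAct_even (m : ℤ) (n : Multiplicative ℤ) :
    negAct (ofAdd (2 * m)) n = n := by
  have h2 : (MulEquiv.inv (Multiplicative ℤ)) ^ (2 : ℤ) = 1 := by
    ext z; rw [zpow_two]; simp
  simp only [negAct, zpowersHom_apply, toAdd_ofAdd]
  rw [zpow_mul, h2, one_zpow]
  rfl

lemma negAct_gen (n : Multiplicative ℤ) : negAct (ofAdd 1) n = n⁻¹ := by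
  simp [negAct]

lemma rel_in_D :
    (inr (ofAdd 1) : D) * inl (ofAdd 1) * (inr (ofAdd 1))⁻¹ * inl (ofAdd 1) = 1 := by
  rw [show ((inr (ofAdd (1:ℤ)) : D))⁻¹ = inr (ofAdd (1:ℤ))⁻¹ from (map_inv _ _).symm]
  have := (inl_aut (φ := negAct) (ofAdd (1:ℤ)) (ofAdd (1:ℤ))).symm
  rw [negAct_gen] at this
  rw [this]
  simp

lemma eval_D (m n : ℤ) :
    (inr (ofAdd (2 * m)) : D) * inl (ofAdd n) = ⟨ofAdd n, ofAdd (2 * m)⟩ := by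
  ext
  · rw [mul_left, left_inr, right_inr, left_inl, one_mul, negAct_even]
  · rw [mul_right, right_inr, right_inl, mul_one]

lemma eval_D' (m n : ℤ) :
    (inl (ofAdd m) : D) * inr (ofAdd n) = ⟨ofAdd m, ofAdd n⟩ := by
  ext
  · rw [mul_left, left_inl, right_inl, left_inr, map_one, mul_one]
  · rw [mul_right, right_inl, right_inr, one_mul]

lemma ofAdd_zpow' (a z : ℤ) : (ofAdd a) ^ z = ofAdd (a * z) := by
  rw [← ofAdd_zsmul, smul_eq_mul, mul_comm]

lemma ofAdd_pow' (a : ℤ) (n : ℕ) : (ofAdd a) ^ n = ofAdd (a * n) := by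
  rw [← ofAdd_nsmul, nsmul_eq_mul, mul_comm]

lemma inrc_zpow (c : ℕ) (n : ℤ) :
    ((inr (ofAdd (1:ℤ)) : D) ^ c) ^ n = inr (ofAdd ((c : ℤ) * n)) := by
  rw [← map_pow, ← map_zpow]
  exact congrArg inr (by
    rw [ofAdd_pow', ofAdd_zpow']
    exact congrArg ofAdd (by push_cast; ring))

lemma inl_one_zpow (n : ℤ) : ((inl (ofAdd (1:ℤ)) : D)) ^ n = inl (ofAdd n) := by
  rw [← map_zpow]
  exact congrArg inl (by rw [ofAdd_zpow', one_mul])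

/-- The representation of `K₁` in `D`, with `a ↦ inr 1`, `x ↦ inl 1`. -/
def ψ₁ : K₁ →* D :=
  PresentedGroup.toGroup (liftK₁_rels (inr (ofAdd 1)) (inl (ofAdd 1)) rel_in_D)

/-- The representation of `K₂` in `D`, with `y ↦ inl 1`, `b ↦ inr 1`. -/
def ψ₂ : K₂ →* D :=
  PresentedGroup.toGroup (liftK₂_rels (inl (ofAdd 1)) (inr (ofAdd 1)) rel_in_D)

@[simp] lemma ψ₁_ka : ψ₁ ka = inr (ofAdd 1) :=
  PresentedGroup.toGroup.of (liftK₁_rels _ _ rel_in_D)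
@[simp] lemma ψ₁_kx : ψ₁ kx = inl (ofAdd 1) :=
  PresentedGroup.toGroup.of (liftK₁_rels _ _ rel_in_D)
@[simp] lemma ψ₂_ky : ψ₂ ky = inl (ofAdd 1) :=
  PresentedGroup.toGroup.of (liftK₂_rels _ _ rel_in_D)
@[simp] lemma ψ₂_kb : ψ₂ kb = inr (ofAdd 1) :=
  PresentedGroup.toGroup.of (liftK₂_rels _ _ rel_in_D)

/-! ### The amalgamating maps -/

def φfam (k : ℕ) (hk : 0 < k) : ∀ i : Bool, Multiplicative (ℤ × ℤ) →* kleinFam i := fun i =>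
  match i with
  | true => pairHom (ka ^ 2) kx commK₁
  | false => pairHom ky (kb ^ (2 ^ k)) (commK₂ k hk)

lemma φfam_true_e₁ (k : ℕ) (hk : 0 < k) : φfam k hk true e₁ = ka ^ 2 :=
  pairHom_e₁ (ka ^ 2) kx commK₁
lemma φfam_true_e₂ (k : ℕ) (hk : 0 < k) : φfam k hk true e₂ = kx :=
  pairHom_e₂ (ka ^ 2) kx commK₁
lemma φfam_false_e₁ (k : ℕ) (hk : 0 < k) : φfam k hk false e₁ = ky :=
  pairHom_e₁ ky (kb ^ (2 ^ k)) (commK₂ k hk)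
lemma φfam_false_e₂ (k : ℕ) (hk : 0 < k) : φfam k hk false e₂ = kb ^ (2 ^ k) :=
  pairHom_e₂ ky (kb ^ (2 ^ k)) (commK₂ k hk)

lemma ψ₁_φtrue (k : ℕ) (hk : 0 < k) (p : Multiplicative (ℤ × ℤ)) :
    ψ₁ (φfam k hk true p) =
      ⟨ofAdd (Multiplicative.toAdd p).2, ofAdd (2 * (Multiplicative.toAdd p).1)⟩ := by
  show ψ₁ ((ka ^ 2) ^ (Multiplicative.toAdd p).1 * kx ^ (Multiplicative.toAdd p).2) = _
  rw [map_mul, map_zpow, map_zpow, map_pow, ψ₁_ka, ψ₁_kx,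
    show ((inr (ofAdd (1:ℤ)) : D) ^ 2) ^ (Multiplicative.toAdd p).1
      = inr (ofAdd (2 * (Multiplicative.toAdd p).1)) by
        have := inrc_zpow 2 (Multiplicative.toAdd p).1
        exact this,
    inl_one_zpow, eval_D]

lemma ψ₂_φfalse (k : ℕ) (hk : 0 < k) (p : Multiplicative (ℤ × ℤ)) :
    ψ₂ (φfam k hk false p) =
      ⟨ofAdd (Multiplicative.toAdd p).1, ofAdd (((2 ^ k : ℕ) : ℤ) * (Multiplicative.toAdd p).2)⟩ := by
  show ψ₂ (ky ^ (Multiplicative.toAdd p).1 * (kb ^ (2 ^ k)) ^ (Multiplicative.toAdd p).2) = _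
  rw [map_mul, map_zpow, map_zpow, map_pow, ψ₂_ky, ψ₂_kb, inl_one_zpow, inrc_zpow, eval_D']

lemma φtrue_injective (k : ℕ) (hk : 0 < k) : Function.Injective (φfam k hk true) := by
  intro p q h
  have h' := congrArg ψ₁ h
  rw [ψ₁_φtrue, ψ₁_φtrue] at h'
  have h1 := Multiplicative.ofAdd.injective (congrArg SemidirectProduct.left h')
  have h2 := Multiplicative.ofAdd.injective (congrArg SemidirectProduct.right h')
  have h2' : 2 * (Multiplicative.toAdd p).1 = 2 * (Multiplicative.toAdd q).1 := h2
  exact Multiplicative.toAdd.injective (Prod.ext (by omega) h1)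

lemma φfalse_injective (k : ℕ) (hk : 0 < k) : Function.Injective (φfam k hk false) := by
  intro p q h
  have h' := congrArg ψ₂ h
  rw [ψ₂_φfalse, ψ₂_φfalse] at h'
  have h1 := Multiplicative.ofAdd.injective (congrArg SemidirectProduct.left h')
  have h2 := Multiplicative.ofAdd.injective (congrArg SemidirectProduct.right h')
  have h2' : (Multiplicative.toAdd p).2 = (Multiplicative.toAdd q).2 :=
    mul_left_cancel₀ (by positivity : (((2 ^ k : ℕ) : ℤ)) ≠ 0) h2
  exact Multiplicative.toAdd.injective (Prod.ext h1 h2')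

/-! ### Relations in `Pk` -/

def pA (k : ℕ) : Pk k := PresentedGroup.of 0
def pB (k : ℕ) : Pk k := PresentedGroup.of 1

lemma relP1 (k : ℕ) : pA k * pB k ^ (2 ^ k) * (pA k)⁻¹ * pB k ^ (2 ^ k) = 1 := by
  have := PresentedGroup.rel_one (rels := PkRels k) (r :=
    FreeGroup.of 0 * (FreeGroup.of 1) ^ (2 ^ k) * (FreeGroup.of 0)⁻¹ *
      (FreeGroup.of 1) ^ (2 ^ k)) (Set.mem_insert _ _)
  simpa [pA, pB, PresentedGroup.of, map_mul, map_inv, map_pow] using this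

lemma relP2 (k : ℕ) : pB k * pA k ^ 2 * (pB k)⁻¹ * pA k ^ 2 = 1 := by
  have := PresentedGroup.rel_one (rels := PkRels k) (r :=
    FreeGroup.of 1 * (FreeGroup.of 0) ^ 2 * (FreeGroup.of 1)⁻¹ * (FreeGroup.of 0) ^ 2)
    (Set.mem_insert_of_mem _ rfl)
  simpa [pA, pB, PresentedGroup.of, map_mul, map_inv, map_pow] using this

lemma commP (k : ℕ) : Commute (pA k ^ 2) (pB k ^ (2 ^ k)) :=
  comm_sq_of_rel (relP1 k)

/-! ### The two identifications inside the pushout -/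

lemma key_x (k : ℕ) (hk : 0 < k) :
    Monoid.PushoutI.of (φ := φfam k hk) true kx =
      Monoid.PushoutI.of (φ := φfam k hk) false (kb ^ (2 ^ k)) := by
  rw [← φfam_true_e₂ k hk, ← φfam_false_e₂ k hk,
    Monoid.PushoutI.of_apply_eq_base, Monoid.PushoutI.of_apply_eq_base]

lemma key_a (k : ℕ) (hk : 0 < k) :
    Monoid.PushoutI.of (φ := φfam k hk) true (ka ^ 2) =
      Monoid.PushoutI.of (φ := φfam k hk) false ky := by
  rw [← φfam_true_e₁ k hk, ← φfam_false_e₁ k hk,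
    Monoid.PushoutI.of_apply_eq_base, Monoid.PushoutI.of_apply_eq_base]

lemma pushout_rel1 (k : ℕ) (hk : 0 < k) :
    (Monoid.PushoutI.of (φ := φfam k hk) true ka) *
        (Monoid.PushoutI.of (φ := φfam k hk) false kb) ^ (2 ^ k) *
        (Monoid.PushoutI.of (φ := φfam k hk) true ka)⁻¹ *
        (Monoid.PushoutI.of (φ := φfam k hk) false kb) ^ (2 ^ k) = 1 := by
  erw [← map_pow, ← key_x k hk, ← map_inv, ← map_mul, ← map_mul, ← map_mul, relK₁, map_one]

lemma pushout_rel2 (k : ℕ) (hk : 0 < k) :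
    (Monoid.PushoutI.of (φ := φfam k hk) false kb) *
        (Monoid.PushoutI.of (φ := φfam k hk) true ka) ^ 2 *
        (Monoid.PushoutI.of (φ := φfam k hk) false kb)⁻¹ *
        (Monoid.PushoutI.of (φ := φfam k hk) true ka) ^ 2 = 1 := by
  erw [← map_pow, key_a k hk, ← map_inv, ← map_mul, ← map_mul, ← map_mul, relK₂, map_one]

/-! ### The two homomorphisms of the isomorphism -/

def Fhom (k : ℕ) (hk : 0 < k) : Pk k →* Monoid.PushoutI (φfam k hk) :=
  PresentedGroup.toGroup
    (liftPk_rels k (Monoid.PushoutI.of (φ := φfam k hk) true ka)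
      (Monoid.PushoutI.of (φ := φfam k hk) false kb) (pushout_rel1 k hk) (pushout_rel2 k hk))

lemma Fhom_pA (k : ℕ) (hk : 0 < k) :
    Fhom k hk (pA k) = Monoid.PushoutI.of (φ := φfam k hk) true ka :=
  PresentedGroup.toGroup.of (liftPk_rels k _ _ (pushout_rel1 k hk) (pushout_rel2 k hk))

lemma Fhom_pB (k : ℕ) (hk : 0 < k) :
    Fhom k hk (pB k) = Monoid.PushoutI.of (φ := φfam k hk) false kb :=
  PresentedGroup.toGroup.of (liftPk_rels k _ _ (pushout_rel1 k hk) (pushout_rel2 k hk))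

def ghom (k : ℕ) : ∀ i : Bool, kleinFam i →* Pk k := fun i =>
  match i with
  | true => PresentedGroup.toGroup (liftK₁_rels (pA k) (pB k ^ (2 ^ k)) (relP1 k))
  | false => PresentedGroup.toGroup (liftK₂_rels (pA k ^ 2) (pB k) (relP2 k))

@[simp] lemma ghom_ka (k : ℕ) : ghom k true ka = pA k :=
  PresentedGroup.toGroup.of (liftK₁_rels _ _ (relP1 k))
@[simp] lemma ghom_kx (k : ℕ) : ghom k true kx = pB k ^ (2 ^ k) :=
  PresentedGroup.toGroup.of (liftK₁_rels _ _ (relP1 k))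
@[simp] lemma ghom_ky (k : ℕ) : ghom k false ky = pA k ^ 2 :=
  PresentedGroup.toGroup.of (liftK₂_rels _ _ (relP2 k))
@[simp] lemma ghom_kb (k : ℕ) : ghom k false kb = pB k :=
  PresentedGroup.toGroup.of (liftK₂_rels _ _ (relP2 k))

def Ghom (k : ℕ) (hk : 0 < k) : Monoid.PushoutI (φfam k hk) →* Pk k :=
  Monoid.PushoutI.lift (ghom k) (pairHom (pA k ^ 2) (pB k ^ (2 ^ k)) (commP k)) (by
    intro i
    cases i
    · ext p
      show ghom k false (ky ^ (Multiplicative.toAdd p).1 *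
        (kb ^ (2 ^ k)) ^ (Multiplicative.toAdd p).2) = _
      erw [map_mul, map_zpow, map_zpow, map_pow, ghom_ky, ghom_kb]
      rfl
    · ext p
      show ghom k true ((ka ^ 2) ^ (Multiplicative.toAdd p).1 *
        kx ^ (Multiplicative.toAdd p).2) = _
      erw [map_mul, map_zpow, map_zpow, map_pow, ghom_ka, ghom_kx]
      rfl)

lemma Ghom_of_true (k : ℕ) (hk : 0 < k) (g : K₁) :
    Ghom k hk (Monoid.PushoutI.of (φ := φfam k hk) true g) = ghom k true g :=
  Monoid.PushoutI.lift_of _ _ _ _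

lemma Ghom_of_false (k : ℕ) (hk : 0 < k) (g : K₂) :
    Ghom k hk (Monoid.PushoutI.of (φ := φfam k hk) false g) = ghom k false g :=
  Monoid.PushoutI.lift_of _ _ _ _

/-- `P_k` is the amalgamated free product `K₁ *_{ℤ²} K₂` of two Klein bottle groups,
amalgamated along `⟨a², x⟩ ≅ ℤ²` and `⟨b^(2^k), y⟩ ≅ ℤ²` via `x ↦ b^(2^k)`, `a² ↦ y`:
there are injective homomorphisms `φ true : ℤ² → K₁` and `φ false : ℤ² → K₂` with
`φ true e₁ = a²`, `φ true e₂ = x`, `φ false e₁ = y`, `φ false e₂ = b^(2^k)` (so the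
identification sends `a² ↦ y` and `x ↦ b^(2^k)`), and `P_k` is isomorphic to the
pushout (amalgamated product) of this diagram. -/
theorem Pk_is_amalgam_of_klein_bottle_groups (k : ℕ) (hk : 0 < k) :
    ∃ φ : ∀ i : Bool, Multiplicative (ℤ × ℤ) →* kleinFam i,
      Function.Injective (φ true) ∧ Function.Injective (φ false) ∧
      φ true e₁ = (ka : kleinFam true) ^ 2 ∧ φ true e₂ = (kx : kleinFam true) ∧
      φ false e₁ = (ky : kleinFam false) ∧ φ false e₂ = (kb : kleinFam false) ^ (2 ^ k) ∧
      Nonempty (Pk k ≃* Monoid.PushoutI φ) := by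
  refine ⟨φfam k hk, φtrue_injective k hk, φfalse_injective k hk,
    φfam_true_e₁ k hk, φfam_true_e₂ k hk, φfam_false_e₁ k hk, φfam_false_e₂ k hk, ⟨?_⟩⟩
  refine MonoidHom.toMulEquiv (Fhom k hk) (Ghom k hk) ?_ ?_
  · -- G ∘ F = id on Pk
    apply PresentedGroup.ext
    intro x
    fin_cases x
    · show Ghom k hk (Fhom k hk (pA k)) = pA k
      rw [Fhom_pA, Ghom_of_true, ghom_ka]
    · show Ghom k hk (Fhom k hk (pB k)) = pB k
      rw [Fhom_pB, Ghom_of_false, ghom_kb]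
  · -- F ∘ G = id on the pushout
    apply Monoid.PushoutI.hom_ext_nonempty
    intro i
    cases i
    · apply PresentedGroup.ext
      intro x
      fin_cases x
      · show Fhom k hk (Ghom k hk (Monoid.PushoutI.of (φ := φfam k hk) false ky)) =
          Monoid.PushoutI.of (φ := φfam k hk) false ky
        erw [Ghom_of_false, ghom_ky, map_pow, Fhom_pA, ← map_pow, key_a k hk]
      · show Fhom k hk (Ghom k hk (Monoid.PushoutI.of (φ := φfam k hk) false kb)) =
          Monoid.PushoutI.of (φ := φfam k hk) false kb
        rw [Ghom_of_false, ghom_kb, Fhom_pB]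
    · apply PresentedGroup.ext
      intro x
      fin_cases x
      · show Fhom k hk (Ghom k hk (Monoid.PushoutI.of (φ := φfam k hk) true ka)) =
          Monoid.PushoutI.of (φ := φfam k hk) true ka
        rw [Ghom_of_true, ghom_ka, Fhom_pA]
      · show Fhom k hk (Ghom k hk (Monoid.PushoutI.of (φ := φfam k hk) true kx)) =
          Monoid.PushoutI.of (φ := φfam k hk) true kx
        erw [Ghom_of_true, ghom_kx, map_pow, Fhom_pB, ← map_pow, ← key_x k hk]
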